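/- arXiv:2511.03548 — 4 statements merged into one kernel-verified Lean document; each statement's English description precedes it below -/
import Mathlib

section
/- Let f : ℝ^d → ℝ be nonnegative, convex, β-smooth, and suppose there exists w* with f(w* + u) = 0 for all ‖u‖ ≤ ρ. Let a sequence satisfy w_{t+1} = w_t − η∇f(w_t + v_t) with ‖v_t‖ ≤ r for all t and η ≤ 1/(4β). Then (1/T)·Σ_{t=1}^T f(w_t + v_t) ≤ ‖w_1 − w*‖²/(ηT) + 4β·max(r − ρ, 0)². -/
open RealInnerProductSpace

variable {F : Type*} [NormedAddCommGroup F] [InnerProductSpace ℝ F] [CompleteSpace F]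

lemma line_hasDerivAt (f : F → ℝ) (hdiff : Differentiable ℝ f) (x y : F) (t : ℝ) :
    HasDerivAt (fun s : ℝ => f (x + s • (y - x))) ⟪gradient f (x + t • (y - x)), y - x⟫ t := by
  have hline : HasDerivAt (fun s : ℝ => x + s • (y - x)) (y - x) t := by
    simpa using ((hasDerivAt_id t).smul_const (y - x)).const_add x
  have hf := (hdiff (x + t • (y - x))).hasGradientAt
  rw [hasGradientAt_iff_hasFDerivAt] at hf
  have := hf.comp_hasDerivAt t hline
  simpa [Function.comp_def] using this

lemma convex_grad_le (f : F → ℝ) (hconv : ConvexOn ℝ Set.univ f) (hdiff : Differentiable ℝ f)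
    (x y : F) : f x + ⟪gradient f x, y - x⟫ ≤ f y := by
  set φ : ℝ → ℝ := fun s => f (x + s • (y - x)) with hφ
  have hconvφ : ConvexOn ℝ Set.univ φ := by
    have := hconv.comp_affineMap (AffineMap.lineMap x y : ℝ →ᵃ[ℝ] F)
    have h2 : (f ∘ (AffineMap.lineMap x y : ℝ →ᵃ[ℝ] F)) = φ := by
      funext s
      simp [φ, AffineMap.lineMap_apply]
      rw [add_comm]
    rwa [h2] at this
  have hd : HasDerivAt φ ⟪gradient f x, y - x⟫ 0 := by
    simpa using line_hasDerivAt f hdiff x y 0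
  have := hconvφ.le_slope_of_hasDerivAt (Set.mem_univ (0:ℝ)) (Set.mem_univ (1:ℝ)) one_pos hd
  simp [slope, φ] at this
  have e : ⟪gradient f x, y - x⟫ = fderiv ℝ f x y - fderiv ℝ f x x := by simp
  linarith

lemma descent_lemma (f : F → ℝ) (β : ℝ) (hβ : 0 < β) (hdiff : Differentiable ℝ f)
    (hsmooth : ∀ x y, ‖gradient f x - gradient f y‖ ≤ β * ‖x - y‖) (x y : F) :
    f y ≤ f x + ⟪gradient f x, y - x⟫ + β / 2 * ‖y - x‖ ^ 2 := by
  set g : ℝ → ℝ := fun t => ⟪gradient f (x + t • (y - x)), y - x⟫ with hg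
  have hgrad_cont : Continuous (gradient f) := by
    have : LipschitzWith β.toNNReal (gradient f) := by
      apply LipschitzWith.of_dist_le_mul
      intro a b
      simpa [dist_eq_norm, Real.coe_toNNReal β hβ.le] using hsmooth a b
    exact this.continuous
  have hgc : Continuous g := by
    apply Continuous.inner
    · exact hgrad_cont.comp (by continuity)
    · exact continuous_const
  have hftc : ∫ t in (0:ℝ)..1, g t = f (x + (1:ℝ) • (y - x)) - f (x + (0:ℝ) • (y - x)) := by
    exact intervalIntegral.integral_eq_sub_of_hasDerivAt
      (fun t _ => line_hasDerivAt f hdiff x y t) (hgc.intervalIntegrable 0 1)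
  have hmono : ∫ t in (0:ℝ)..1, g t ≤ ∫ t in (0:ℝ)..1, (g 0 + β * ‖y - x‖ ^ 2 * t) := by
    apply intervalIntegral.integral_mono_on zero_le_one (hgc.intervalIntegrable 0 1)
    · exact ((continuous_const.add (continuous_const.mul continuous_id)).intervalIntegrable 0 1)
    · intro t ht
      have hdiffg : g t - g 0 ≤ β * ‖y - x‖ ^ 2 * t := by
        have h1 : g t - g 0 = ⟪gradient f (x + t • (y - x)) - gradient f (x + (0:ℝ) • (y - x)), y - x⟫ := by
          simp [g, inner_sub_left]
        have h2 := abs_real_inner_le_norm (gradient f (x + t • (y - x)) - gradient f (x + (0:ℝ) • (y - x))) (y - x)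
        have h3 := hsmooth (x + t • (y - x)) (x + (0:ℝ) • (y - x))
        have h4 : ‖(x + t • (y - x)) - (x + (0:ℝ) • (y - x))‖ = t * ‖y - x‖ := by
          simp [norm_smul, abs_of_nonneg ht.1]
        calc g t - g 0 ≤ |⟪gradient f (x + t • (y - x)) - gradient f (x + (0:ℝ) • (y - x)), y - x⟫| := by
              rw [h1]; exact le_abs_self _
          _ ≤ ‖gradient f (x + t • (y - x)) - gradient f (x + (0:ℝ) • (y - x))‖ * ‖y - x‖ := h2
          _ ≤ β * (t * ‖y - x‖) * ‖y - x‖ := by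
              rw [← h4]
              exact mul_le_mul_of_nonneg_right h3 (norm_nonneg _)
          _ = β * ‖y - x‖ ^ 2 * t := by ring
      linarith
  have hrhs : ∫ t in (0:ℝ)..1, (g 0 + β * ‖y - x‖ ^ 2 * t) = g 0 + β / 2 * ‖y - x‖ ^ 2 := by
    rw [intervalIntegral.integral_add (intervalIntegrable_const)
      ((by fun_prop : Continuous fun t : ℝ => β * ‖y - x‖ ^ 2 * t).intervalIntegrable 0 1)]
    rw [intervalIntegral.integral_const_mul]
    simp [integral_id]
    ring
  have hg0 : g 0 = ⟪gradient f x, y - x⟫ := by simp [g]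
  have := hftc ▸ hmono
  rw [hrhs, hg0] at this
  simp at this
  have e : ⟪gradient f x, y - x⟫ = fderiv ℝ f x y - fderiv ℝ f x x := by simp
  linarith

lemma grad_sq_le (f : F → ℝ) (β : ℝ) (hβ : 0 < β) (hnonneg : ∀ w, 0 ≤ f w)
    (hdiff : Differentiable ℝ f)
    (hsmooth : ∀ x y, ‖gradient f x - gradient f y‖ ≤ β * ‖x - y‖) (x : F) :
    ‖gradient f x‖ ^ 2 ≤ 2 * β * f x := by
  have h := descent_lemma f β hβ hdiff hsmooth x (x - (1 / β) • gradient f x)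
  have h0 := hnonneg (x - (1 / β) • gradient f x)
  have h1 : (x - (1 / β) • gradient f x) - x = -((1 / β) • gradient f x) := by abel
  rw [h1] at h
  have h2 : ⟪gradient f x, -((1 / β) • gradient f x)⟫ = -(1 / β) * ‖gradient f x‖ ^ 2 := by
    rw [inner_neg_right, real_inner_smul_right, real_inner_self_eq_norm_sq]; ring
  have h3 : ‖-((1 / β) • gradient f x)‖ ^ 2 = (1 / β) ^ 2 * ‖gradient f x‖ ^ 2 := by
    rw [norm_neg, norm_smul, mul_pow, Real.norm_eq_abs, abs_of_nonneg (by positivity : (0:ℝ) ≤ 1 / β)]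
  rw [h2, h3] at h
  have hβ' : β ≠ 0 := hβ.ne'
  have : 0 ≤ f x - 1 / (2 * β) * ‖gradient f x‖ ^ 2 := by
    have e : -(1 / β) * ‖gradient f x‖ ^ 2 + β / 2 * ((1 / β) ^ 2 * ‖gradient f x‖ ^ 2)
        = -(1 / (2 * β)) * ‖gradient f x‖ ^ 2 := by field_simp; ring
    linarith [h, h0, e.symm.le, e.le]
  have h2β : 0 < 2 * β := by positivity
  have h5 : 1 / (2 * β) * ‖gradient f x‖ ^ 2 ≤ f x := by linarith
  calc ‖gradient f x‖ ^ 2 = 2 * β * (1 / (2 * β) * ‖gradient f x‖ ^ 2) := by field_simp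
    _ ≤ 2 * β * f x := mul_le_mul_of_nonneg_left h5 h2β.le

set_option maxHeartbeats 1000000 in
lemma step_ineq (f : F → ℝ) (β ρ r η : ℝ) (hβ : 0 < β) (hρ : 0 ≤ ρ) (hr : 0 ≤ r)
    (hη : 0 < η) (hη' : η ≤ 1 / (4 * β))
    (hnonneg : ∀ w, 0 ≤ f w) (hconv : ConvexOn ℝ Set.univ f) (hdiff : Differentiable ℝ f)
    (hsmooth : ∀ x y, ‖gradient f x - gradient f y‖ ≤ β * ‖x - y‖)
    (wstar : F) (hflat : ∀ u, ‖u‖ ≤ ρ → f (wstar + u) = 0)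
    (wt vt : F) (hvt : ‖vt‖ ≤ r) :
    ‖(wt - η • gradient f (wt + vt)) - wstar‖ ^ 2
      ≤ ‖wt - wstar‖ ^ 2 - η * f (wt + vt) + 4 * β * η * max (r - ρ) 0 ^ 2 := by
  set x := wt + vt with hx
  set g := gradient f x with hgdef
  set δ := max (r - ρ) 0 with hδdef
  have hδ0 : 0 ≤ δ := le_max_right _ _
  obtain ⟨u, hu_norm, huv⟩ : ∃ u : F, ‖u‖ ≤ ρ ∧ ‖vt - u‖ ≤ δ := by
    refine ⟨if ‖vt‖ ≤ ρ then vt else (ρ / ‖vt‖) • vt, ?_, ?_⟩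
    all_goals split_ifs with hc
    · exact hc
    · push_neg at hc
      have hv0 : 0 < ‖vt‖ := lt_of_le_of_lt hρ hc
      rw [norm_smul, Real.norm_eq_abs, abs_of_nonneg (by positivity)]
      rw [div_mul_cancel₀ _ hv0.ne']
    · simpa using hδ0
    · push_neg at hc
      have hv0 : 0 < ‖vt‖ := lt_of_le_of_lt hρ hc
      have h1 : vt - (ρ / ‖vt‖) • vt = (1 - ρ / ‖vt‖) • vt := by
        rw [sub_smul, one_smul]
      rw [h1, norm_smul, Real.norm_eq_abs]
      have h2 : ρ / ‖vt‖ ≤ 1 := by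
        rw [div_le_one hv0]; exact hc.le
      rw [abs_of_nonneg (by linarith)]
      have : (1 - ρ / ‖vt‖) * ‖vt‖ = ‖vt‖ - ρ := by field_simp
      rw [this]
      calc ‖vt‖ - ρ ≤ r - ρ := by linarith
        _ ≤ δ := le_max_left _ _
  have hfu : f (wstar + u) = 0 := hflat u hu_norm
  -- convexity
  have hcx := convex_grad_le f hconv hdiff x (wstar + u)
  rw [hfu] at hcx
  have hinner_split : ⟪g, (wstar + u) - x⟫ = -⟪g, wt - wstar⟫ - ⟪g, vt - u⟫ := by
    have : (wstar + u) - x = -(wt - wstar) - (vt - u) := by rw [hx]; abel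
    rw [this, inner_sub_right, inner_neg_right]
  have hcs : |⟪g, vt - u⟫| ≤ ‖g‖ * δ := by
    calc |⟪g, vt - u⟫| ≤ ‖g‖ * ‖vt - u‖ := abs_real_inner_le_norm g (vt - u)
      _ ≤ ‖g‖ * δ := mul_le_mul_of_nonneg_left huv (norm_nonneg _)
  have hkey : f x - ‖g‖ * δ ≤ ⟪g, wt - wstar⟫ := by
    have h1 : f x ≤ ⟪g, wt - wstar⟫ + ⟪g, vt - u⟫ := by
      rw [hinner_split] at hcx; linarith
    have h2 : ⟪g, vt - u⟫ ≤ ‖g‖ * δ := le_of_abs_le hcs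
    linarith
  -- expansion
  have hexp : ‖(wt - η • g) - wstar‖ ^ 2
      = ‖wt - wstar‖ ^ 2 - 2 * η * ⟪wt - wstar, g⟫ + η ^ 2 * ‖g‖ ^ 2 := by
    have h1 : (wt - η • g) - wstar = (wt - wstar) - η • g := by abel
    rw [h1, norm_sub_sq_real, real_inner_smul_right, norm_smul, Real.norm_eq_abs,
      abs_of_nonneg hη.le, mul_pow]
    ring
  have hsym : ⟪wt - wstar, g⟫ = ⟪g, wt - wstar⟫ := real_inner_comm _ _
  -- smoothness bounds
  have hgsq : ‖g‖ ^ 2 ≤ 2 * β * f x := grad_sq_le f β hβ hnonneg hdiff hsmooth x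
  have hfx0 : 0 ≤ f x := hnonneg x
  have hgδ : 2 * (‖g‖ * δ) ≤ f x / 2 + 4 * β * δ ^ 2 := by
    have h8 : 8 * β * (‖g‖ * δ) ≤ ‖g‖ ^ 2 + 16 * β ^ 2 * δ ^ 2 := by
      nlinarith [sq_nonneg (‖g‖ - 4 * β * δ)]
    have h9 : 8 * β * (‖g‖ * δ) ≤ 2 * β * f x + 16 * β ^ 2 * δ ^ 2 := by linarith
    nlinarith [h9, hβ]
  have hA : η * (2 * (‖g‖ * δ)) ≤ η * (f x / 2 + 4 * β * δ ^ 2) :=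
    mul_le_mul_of_nonneg_left hgδ hη.le
  have hB : η ^ 2 * ‖g‖ ^ 2 ≤ η * (f x / 2) := by
    have h1 : η * ‖g‖ ^ 2 ≤ (1 / (4 * β)) * ‖g‖ ^ 2 :=
      mul_le_mul_of_nonneg_right hη' (sq_nonneg _)
    have h2 : (1 / (4 * β)) * ‖g‖ ^ 2 ≤ (1 / (4 * β)) * (2 * β * f x) :=
      mul_le_mul_of_nonneg_left hgsq (by positivity)
    have h3 : (1 / (4 * β)) * (2 * β * f x) = f x / 2 := by field_simp; ring
    calc η ^ 2 * ‖g‖ ^ 2 = η * (η * ‖g‖ ^ 2) := by ring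
      _ ≤ η * ((1 / (4 * β)) * ‖g‖ ^ 2) := mul_le_mul_of_nonneg_left h1 hη.le
      _ ≤ η * ((1 / (4 * β)) * (2 * β * f x)) := mul_le_mul_of_nonneg_left h2 hη.le
      _ = η * (f x / 2) := by rw [h3]
  have hC : -(2 * η * ⟪g, wt - wstar⟫) ≤ -(2 * η) * (f x - ‖g‖ * δ) := by
    have := mul_le_mul_of_nonneg_left hkey (by positivity : (0:ℝ) ≤ 2 * η)
    linarith
  rw [hexp, hsym]
  linarith [hA, hB, hC]



/-- Regret lemma: if `f` is nonnegative, convex, `β`-smooth and vanishes on the ball of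
radius `ρ` around `w*`, and `w_{t+1} = w_t - η∇f(w_t + v_t)` with `‖v_t‖ ≤ r` and
`η ≤ 1/(4β)`, then `(1/T)·Σ_{t=1}^T f(w_t + v_t) ≤ ‖w₁ - w*‖²/(ηT) + 4β·max(r-ρ,0)²`. -/
theorem stmt_9 (d : ℕ) (β ρ r η : ℝ) (hβ : 0 < β) (hρ : 0 ≤ ρ) (hr : 0 ≤ r)
    (hη : 0 < η) (hη' : η ≤ 1 / (4 * β))
    (f : EuclideanSpace ℝ (Fin d) → ℝ)
    (hnonneg : ∀ w, 0 ≤ f w) (hconv : ConvexOn ℝ Set.univ f) (hdiff : Differentiable ℝ f)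
    (hsmooth : ∀ x y, ‖gradient f x - gradient f y‖ ≤ β * ‖x - y‖)
    (wstar : EuclideanSpace ℝ (Fin d)) (hflat : ∀ u, ‖u‖ ≤ ρ → f (wstar + u) = 0)
    (T : ℕ) (hT : 1 ≤ T) (w v : ℕ → EuclideanSpace ℝ (Fin d))
    (hv : ∀ t, ‖v t‖ ≤ r)
    (hupd : ∀ t, w (t + 1) = w t - η • gradient f (w t + v t)) :
    (1 / (T : ℝ)) * ∑ t ∈ Finset.Icc 1 T, f (w t + v t)
      ≤ ‖w 1 - wstar‖ ^ 2 / (η * T) + 4 * β * max (r - ρ) 0 ^ 2 := by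
  set δ := max (r - ρ) 0 with hδdef
  have hstep : ∀ t, ‖w (t + 1) - wstar‖ ^ 2
      ≤ ‖w t - wstar‖ ^ 2 - η * f (w t + v t) + 4 * β * η * δ ^ 2 := by
    intro t
    rw [hupd t]
    exact step_ineq f β ρ r η hβ hρ hr hη hη' hnonneg hconv hdiff hsmooth wstar hflat
      (w t) (v t) (hv t)
  have htel : ∀ S : ℕ, ‖w (S + 1) - wstar‖ ^ 2
      ≤ ‖w 1 - wstar‖ ^ 2 - η * ∑ t ∈ Finset.Icc 1 S, f (w t + v t)
        + S * (4 * β * η * δ ^ 2) := by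
    intro S
    induction S with
    | zero => simp
    | succ n ih =>
      rw [Finset.sum_Icc_succ_top (by omega : 1 ≤ n + 1)]
      have h2 := hstep (n + 1)
      push_cast
      calc ‖w (n + 1 + 1) - wstar‖ ^ 2
          ≤ ‖w (n + 1) - wstar‖ ^ 2 - η * f (w (n + 1) + v (n + 1)) + 4 * β * η * δ ^ 2 := h2
        _ ≤ _ := by push_cast at ih ⊢; linarith
  have hTtel := htel T
  have hpos : (0:ℝ) ≤ ‖w (T + 1) - wstar‖ ^ 2 := sq_nonneg _
  have hsum : η * ∑ t ∈ Finset.Icc 1 T, f (w t + v t)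
      ≤ ‖w 1 - wstar‖ ^ 2 + T * (4 * β * η * δ ^ 2) := by linarith
  have hT0 : (0:ℝ) < T := by exact_mod_cast hT
  have hηT : (0:ℝ) < η * T := by positivity
  have goal' : (1 / (T : ℝ)) * ∑ t ∈ Finset.Icc 1 T, f (w t + v t)
      ≤ (‖w 1 - wstar‖ ^ 2 + T * (4 * β * η * δ ^ 2)) / (η * T) := by
    rw [← mul_le_mul_iff_right₀ hη]
    calc η * (1 / (T:ℝ) * ∑ t ∈ Finset.Icc 1 T, f (w t + v t))
        = (T:ℝ)⁻¹ * (η * ∑ t ∈ Finset.Icc 1 T, f (w t + v t)) := by ring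
      _ ≤ (T:ℝ)⁻¹ * (‖w 1 - wstar‖ ^ 2 + T * (4 * β * η * δ ^ 2)) := by
          exact mul_le_mul_of_nonneg_left hsum (by positivity)
      _ = η * ((‖w 1 - wstar‖ ^ 2 + T * (4 * β * η * δ ^ 2)) / (η * T)) := by
          field_simp
  have heq : (‖w 1 - wstar‖ ^ 2 + T * (4 * β * η * δ ^ 2)) / (η * T)
      = ‖w 1 - wstar‖ ^ 2 / (η * T) + 4 * β * δ ^ 2 := by
    field_simp
  calc (1 / (T : ℝ)) * ∑ t ∈ Finset.Icc 1 T, f (w t + v t)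
      ≤ (‖w 1 - wstar‖ ^ 2 + T * (4 * β * η * δ ^ 2)) / (η * T) := goal'
    _ = ‖w 1 - wstar‖ ^ 2 / (η * T) + 4 * β * δ ^ 2 := heq
end

section
/- Under the assumptions of the regret lemma with SAM perturbations v_t = r·∇f(w_t)/‖∇f(w_t)‖ (and v_t = 0 when ∇f(w_t) = 0), the averaged iterate ŵ = (1/T)Σ w_t satisfies f(ŵ) ≤ ‖w_1 − w*‖²/(ηT) + 4β·max(r − ρ, 0)². -/
open RealInnerProductSpace

section Aux
variable {E : Type*} [NormedAddCommGroup E] [InnerProductSpace ℝ E] [CompleteSpace E]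

lemma sam_line_hasDerivAt (f : E → ℝ) (hdiff : Differentiable ℝ f) (x u : E) (s : ℝ) :
    HasDerivAt (fun t : ℝ => f (x + t • u)) ⟪gradient f (x + s • u), u⟫ s := by
  have h1 : HasDerivAt (fun t : ℝ => x + t • u) u s := by
    simpa using ((hasDerivAt_id s).smul_const u).const_add x
  have h2 := hasGradientAt_iff_hasFDerivAt.mp (hdiff (x + s • u)).hasGradientAt
  have := h2.comp_hasDerivAt s h1
  simpa [InnerProductSpace.toDual_apply_apply, inner_gradient_left, Function.comp_def] using this

lemma sam_grad_ineq (f : E → ℝ) (hconv : ConvexOn ℝ Set.univ f) (hdiff : Differentiable ℝ f)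
    (x y : E) : f x + ⟪gradient f x, y - x⟫ ≤ f y := by
  have hline : ConvexOn ℝ Set.univ fun t : ℝ => f (x + t • (y - x)) := by
    have h := hconv.comp_affineMap (AffineMap.lineMap x y)
    have he : (f ∘ (AffineMap.lineMap x y : ℝ →ᵃ[ℝ] E)) = fun t : ℝ => f (x + t • (y - x)) := by
      funext t; simp [AffineMap.lineMap_apply, add_comm]
    rw [he] at h; simpa using h
  have hd := sam_line_hasDerivAt f hdiff x (y - x) 0
  simp only [zero_smul, add_zero] at hd
  have := hline.le_slope_of_hasDerivAt (Set.mem_univ (0:ℝ)) (Set.mem_univ (1:ℝ))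
    one_pos hd
  rw [slope_def_field] at this
  simp only [zero_smul, add_zero, one_smul, add_sub_cancel] at this
  norm_num at this
  rw [inner_gradient_left, map_sub]; linarith

lemma sam_descent {β : ℝ} (hβ : 0 < β) (f : E → ℝ) (hdiff : Differentiable ℝ f)
    (hsmooth : ∀ x y, ‖gradient f x - gradient f y‖ ≤ β * ‖x - y‖) (x y : E) :
    f y ≤ f x + ⟪gradient f x, y - x⟫ + β / 2 * ‖y - x‖ ^ 2 := by
  set u := y - x with hu
  set D : ℝ → ℝ := fun t => ⟪gradient f (x + t • u), u⟫ with hD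
  have hgc : Continuous fun z : E => gradient f z := by
    refine (LipschitzWith.of_dist_le_mul (K := β.toNNReal) fun a b => ?_).continuous
    rw [dist_eq_norm, dist_eq_norm]
    simpa [Real.coe_toNNReal _ hβ.le] using hsmooth a b
  have hDc : Continuous D :=
    (hgc.comp (continuous_const.add (continuous_id.smul continuous_const))).inner
      continuous_const
  have hderiv : ∀ t ∈ Set.uIcc (0:ℝ) 1, HasDerivAt (fun t : ℝ => f (x + t • u)) (D t) t :=
    fun t _ => sam_line_hasDerivAt f hdiff x u t
  have hint : IntervalIntegrable D MeasureTheory.volume 0 1 := hDc.intervalIntegrable 0 1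
  have hftc := intervalIntegral.integral_eq_sub_of_hasDerivAt hderiv hint
  simp only [zero_smul, add_zero, one_smul] at hftc
  have hxy : x + u = y := by rw [hu]; abel
  rw [hxy] at hftc
  have hmono : ∫ t in (0:ℝ)..1, D t ≤ ∫ t in (0:ℝ)..1, (D 0 + β * t * ‖u‖ ^ 2) := by
    apply intervalIntegral.integral_mono_on zero_le_one hint
    · exact (continuous_const.add ((continuous_const.mul continuous_id).mul
        continuous_const)).intervalIntegrable 0 1
    · intro t ht
      have h1 : D t - D 0 = ⟪gradient f (x + t • u) - gradient f (x + (0:ℝ) • u), u⟫ := by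
        simp [hD, inner_sub_left]
      have h2 : ⟪gradient f (x + t • u) - gradient f (x + (0:ℝ) • u), u⟫ ≤
          ‖gradient f (x + t • u) - gradient f (x + (0:ℝ) • u)‖ * ‖u‖ :=
        real_inner_le_norm _ _
      have h3 : ‖gradient f (x + t • u) - gradient f (x + (0:ℝ) • u)‖ ≤ β * (t * ‖u‖) := by
        have := hsmooth (x + t • u) (x + (0:ℝ) • u)
        have he : (x + t • u) - (x + (0:ℝ) • u) = t • u := by simp
        rw [he] at this
        simpa [norm_smul, abs_of_nonneg ht.1] using this
      nlinarith [norm_nonneg u, mul_le_mul_of_nonneg_right h3 (norm_nonneg u)]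
  simp only [show ∀ t : ℝ, D 0 + β * t * ‖u‖ ^ 2 = D 0 + (β * ‖u‖ ^ 2) * t from
    fun t => by ring] at hmono
  have hval : ∫ t in (0:ℝ)..1, (D 0 + (β * ‖u‖ ^ 2) * t) = D 0 + β / 2 * ‖u‖ ^ 2 := by
    have h1 : IntervalIntegrable (fun t : ℝ => β * ‖u‖ ^ 2 * t) MeasureTheory.volume 0 1 :=
      (continuous_const.mul continuous_id').intervalIntegrable 0 1
    rw [intervalIntegral.integral_add intervalIntegrable_const h1,
      intervalIntegral.integral_const_mul, integral_id]
    simp; ring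
  have hD0 : D 0 = ⟪gradient f x, u⟫ := by simp [hD]
  rw [hval, hD0] at hmono
  linarith [hftc ▸ hmono]

lemma sam_grad_sq_le {β : ℝ} (hβ : 0 < β) (f : E → ℝ) (hnonneg : ∀ w, 0 ≤ f w)
    (hdiff : Differentiable ℝ f)
    (hsmooth : ∀ x y, ‖gradient f x - gradient f y‖ ≤ β * ‖x - y‖) (x : E) :
    ‖gradient f x‖ ^ 2 ≤ 2 * β * f x := by
  have h := sam_descent hβ f hdiff hsmooth x (x - β⁻¹ • gradient f x)
  have he : (x - β⁻¹ • gradient f x) - x = -(β⁻¹ • gradient f x) := by abel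
  rw [he] at h
  have h2 : ⟪gradient f x, -(β⁻¹ • gradient f x)⟫ = -(β⁻¹ * ‖gradient f x‖ ^ 2) := by
    rw [inner_neg_right, real_inner_smul_right, real_inner_self_eq_norm_sq]
  have h3 : ‖-(β⁻¹ • gradient f x)‖ ^ 2 = β⁻¹ ^ 2 * ‖gradient f x‖ ^ 2 := by
    rw [norm_neg, norm_smul]
    simp [abs_of_nonneg (inv_nonneg.mpr hβ.le), mul_pow]
  rw [h2, h3] at h
  have h0 := hnonneg (x - β⁻¹ • gradient f x)
  set Gs := ‖gradient f x‖ ^ 2 with hGs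
  have e1 : β⁻¹ * Gs = Gs / β := by rw [inv_mul_eq_div]
  have e2 : β / 2 * (β⁻¹ ^ 2 * Gs) = Gs / (2 * β) := by field_simp
  rw [e1, e2] at h
  have hid : Gs / β - Gs / (2 * β) = Gs / (2 * β) := by field_simp; ring
  have h4 : Gs / (2 * β) ≤ f x := by linarith
  have := (div_le_iff₀ (by positivity : (0:ℝ) < 2 * β)).mp h4
  linarith
end Aux

set_option maxHeartbeats 1000000 in
/-- SAM: under the regret-lemma assumptions, with normalized-ascent perturbations
`v_t = r∇f(w_t)/‖∇f(w_t)‖` (and `v_t = 0` when the gradient vanishes), the averaged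
iterate `ŵ = (1/T)Σ w_t` satisfies `f(ŵ) ≤ ‖w₁ - w*‖²/(ηT) + 4β·max(r-ρ,0)²`. -/
theorem stmt_11 (d : ℕ) (β ρ r η : ℝ) (hβ : 0 < β) (hρ : 0 ≤ ρ) (hr : 0 ≤ r)
    (hη : 0 < η) (hη' : η ≤ 1 / (4 * β))
    (f : EuclideanSpace ℝ (Fin d) → ℝ)
    (hnonneg : ∀ w, 0 ≤ f w) (hconv : ConvexOn ℝ Set.univ f) (hdiff : Differentiable ℝ f)
    (hsmooth : ∀ x y, ‖gradient f x - gradient f y‖ ≤ β * ‖x - y‖)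
    (wstar : EuclideanSpace ℝ (Fin d)) (hflat : ∀ u, ‖u‖ ≤ ρ → f (wstar + u) = 0)
    (T : ℕ) (hT : 1 ≤ T) (w v : ℕ → EuclideanSpace ℝ (Fin d))
    (hv0 : ∀ t, gradient f (w t) = 0 → v t = 0)
    (hv : ∀ t, gradient f (w t) ≠ 0 →
      v t = (r / ‖gradient f (w t)‖) • gradient f (w t))
    (hupd : ∀ t, w (t + 1) = w t - η • gradient f (w t + v t)) :
    f ((T : ℝ)⁻¹ • ∑ t ∈ Finset.Icc 1 T, w t)
      ≤ ‖w 1 - wstar‖ ^ 2 / (η * T) + 4 * β * max (r - ρ) 0 ^ 2 := by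
  set δ : ℝ := max (r - ρ) 0 with hδdef
  have hδ0 : 0 ≤ δ := le_max_right _ _
  have h4βη : η * (4 * β) ≤ 1 := (le_div_iff₀ (by positivity)).mp hη'
  -- per-step inequality
  have key : ∀ t, η * f (w t) ≤
      ‖w t - wstar‖ ^ 2 - ‖w (t + 1) - wstar‖ ^ 2 + 4 * η * β * δ ^ 2 := by
    intro t
    set g := gradient f (w t + v t) with hg
    set A := f (w t + v t) with hA
    have hA0 : 0 ≤ A := hnonneg _
    have hG0 : (0:ℝ) ≤ ‖g‖ := norm_nonneg _
    -- f (w t) ≤ A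
    have hfle : f (w t) ≤ A := by
      have h := sam_grad_ineq f hconv hdiff (w t) (w t + v t)
      have he : (w t + v t) - w t = v t := by abel
      rw [he] at h
      have hpos : 0 ≤ ⟪gradient f (w t), v t⟫ := by
        by_cases hz : gradient f (w t) = 0
        · simp [hz]
        · rw [hv t hz, real_inner_smul_right, real_inner_self_eq_norm_sq]
          have : (0:ℝ) < ‖gradient f (w t)‖ := norm_pos_iff.mpr hz
          positivity
      linarith
    -- good comparison point
    obtain ⟨u, hu1, hu2⟩ : ∃ u, ‖u‖ ≤ ρ ∧ ‖v t - u‖ ≤ δ := by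
      by_cases hz : gradient f (w t) = 0
      · exact ⟨0, by simpa using hρ, by simp [hv0 t hz, hδ0]⟩
      · have hgp : (0:ℝ) < ‖gradient f (w t)‖ := norm_pos_iff.mpr hz
        refine ⟨(min ρ r / ‖gradient f (w t)‖) • gradient f (w t), ?_, ?_⟩
        · rw [norm_smul, Real.norm_eq_abs, abs_div, abs_of_nonneg (le_min hρ hr),
            abs_of_nonneg hgp.le, div_mul_cancel₀ _ hgp.ne']
          exact min_le_left _ _
        · rw [hv t hz, ← sub_smul, div_sub_div_same, norm_smul, Real.norm_eq_abs, abs_div,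
            abs_of_nonneg (by simp [hr] : (0:ℝ) ≤ r - min ρ r),
            abs_of_nonneg hgp.le, div_mul_cancel₀ _ hgp.ne']
          rcases le_total ρ r with h | h
          · simp [min_eq_left h, hδdef, max_eq_left (by linarith : (0:ℝ) ≤ r - ρ)]
          · simp [min_eq_right h, hδdef]
    -- convexity at the perturbed point against wstar + u
    have hcvx : A + ⟪g, (wstar + u) - (w t + v t)⟫ ≤ 0 := by
      have h := sam_grad_ineq f hconv hdiff (w t + v t) (wstar + u)
      rw [hflat u hu1] at h
      exact h
    have hinner : A - ‖g‖ * δ ≤ ⟪g, w t - wstar⟫ := by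
      have hdec : w t - wstar = ((w t + v t) - (wstar + u)) + (u - v t) := by abel
      rw [hdec, inner_add_right]
      have h1 : A ≤ ⟪g, (w t + v t) - (wstar + u)⟫ := by
        have : ⟪g, (wstar + u) - (w t + v t)⟫
            = -⟪g, (w t + v t) - (wstar + u)⟫ := by
          rw [← inner_neg_right]; congr 1; abel
        rw [this] at hcvx; linarith
      have h2 : -(‖g‖ * δ) ≤ ⟪g, u - v t⟫ := by
        have habs := abs_real_inner_le_norm g (u - v t)
        have : ‖u - v t‖ ≤ δ := by rwa [norm_sub_rev]
        have := mul_le_mul_of_nonneg_left this hG0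
        cases' abs_le.mp habs with hl hr'
        linarith
      linarith
    -- expansion of the squared distance
    have hexp : ‖w (t + 1) - wstar‖ ^ 2
        = ‖w t - wstar‖ ^ 2 - 2 * η * ⟪g, w t - wstar⟫ + η ^ 2 * ‖g‖ ^ 2 := by
      rw [hupd t]
      have he : w t - η • g - wstar = (w t - wstar) - η • g := by abel
      rw [he, norm_sub_sq_real, real_inner_smul_right, real_inner_comm, norm_smul,
        Real.norm_eq_abs, abs_of_nonneg hη.le, mul_pow]
      ring
    have hG2 : ‖g‖ ^ 2 ≤ 2 * β * A := sam_grad_sq_le hβ f hnonneg hdiff hsmooth _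
    -- combine
    have e1 : η * ‖g‖ ^ 2 ≤ A / 2 := by
      nlinarith [mul_le_mul_of_nonneg_left hG2 hη.le,
        mul_le_mul_of_nonneg_right h4βη hA0]
    have e2 : 2 * (δ * ‖g‖) ≤ A / 2 + 4 * β * δ ^ 2 := by
      nlinarith [sq_nonneg (‖g‖ - 4 * β * δ), hG2, hβ]
    nlinarith [mul_le_mul_of_nonneg_left hinner (by linarith : (0:ℝ) ≤ 2 * η),
      mul_le_mul_of_nonneg_left e2 hη.le, mul_le_mul_of_nonneg_left e1 hη.le,
      mul_le_mul_of_nonneg_left hfle hη.le, sq_nonneg η]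
  -- telescoping sum
  have hTpos : (0:ℝ) < T := by exact_mod_cast hT
  have htel : ∑ t ∈ Finset.Icc 1 T,
      (‖w t - wstar‖ ^ 2 - ‖w (t + 1) - wstar‖ ^ 2)
      = ‖w 1 - wstar‖ ^ 2 - ‖w (T + 1) - wstar‖ ^ 2 := by
    rw [← Finset.Ico_add_one_right_eq_Icc, Finset.sum_Ico_eq_sum_range]
    simp only [Nat.add_sub_cancel]
    have := Finset.sum_range_sub' (fun i => ‖w (1 + i) - wstar‖ ^ 2) T
    simpa [add_comm] using this
  have hsum : ∑ t ∈ Finset.Icc 1 T, (η * f (w t))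
      ≤ ‖w 1 - wstar‖ ^ 2 + T * (4 * η * β * δ ^ 2) := by
    calc ∑ t ∈ Finset.Icc 1 T, (η * f (w t))
        ≤ ∑ t ∈ Finset.Icc 1 T,
          (‖w t - wstar‖ ^ 2 - ‖w (t + 1) - wstar‖ ^ 2 + 4 * η * β * δ ^ 2) :=
          Finset.sum_le_sum fun t _ => key t
      _ = (‖w 1 - wstar‖ ^ 2 - ‖w (T + 1) - wstar‖ ^ 2) + T * (4 * η * β * δ ^ 2) := by
          rw [Finset.sum_add_distrib, htel, Finset.sum_const, Nat.card_Icc]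
          simp [nsmul_eq_mul]
      _ ≤ ‖w 1 - wstar‖ ^ 2 + T * (4 * η * β * δ ^ 2) := by
          nlinarith [sq_nonneg ‖w (T + 1) - wstar‖]
  -- Jensen
  have hjen : f ((T : ℝ)⁻¹ • ∑ t ∈ Finset.Icc 1 T, w t)
      ≤ ∑ t ∈ Finset.Icc 1 T, (T : ℝ)⁻¹ * f (w t) := by
    have h := hconv.map_sum_le (t := Finset.Icc 1 T) (w := fun _ => (T : ℝ)⁻¹) (p := w)
      (fun _ _ => by positivity)
      (by rw [Finset.sum_const, Nat.card_Icc]; simp [nsmul_eq_mul]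
          field_simp)
      (fun _ _ => Set.mem_univ _)
    rw [Finset.smul_sum]
    simpa [smul_eq_mul] using h
  have hsum2 : ∑ t ∈ Finset.Icc 1 T, (T : ℝ)⁻¹ * f (w t)
      = (T : ℝ)⁻¹ * ∑ t ∈ Finset.Icc 1 T, f (w t) := by
    rw [Finset.mul_sum]
  have hsum3 : η * ∑ t ∈ Finset.Icc 1 T, f (w t)
      ≤ ‖w 1 - wstar‖ ^ 2 + T * (4 * η * β * δ ^ 2) := by
    rw [Finset.mul_sum]; exact hsum
  have hfin : (T : ℝ)⁻¹ * ∑ t ∈ Finset.Icc 1 T, f (w t)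
      ≤ ‖w 1 - wstar‖ ^ 2 / (η * T) + 4 * β * δ ^ 2 := by
    have hs : ∑ t ∈ Finset.Icc 1 T, f (w t)
        ≤ (‖w 1 - wstar‖ ^ 2 + T * (4 * η * β * δ ^ 2)) / η :=
      (le_div_iff₀' hη).mpr hsum3
    calc (T : ℝ)⁻¹ * ∑ t ∈ Finset.Icc 1 T, f (w t)
        ≤ (T : ℝ)⁻¹ * ((‖w 1 - wstar‖ ^ 2 + T * (4 * η * β * δ ^ 2)) / η) :=
          mul_le_mul_of_nonneg_left hs (by positivity)
      _ = ‖w 1 - wstar‖ ^ 2 / (η * T) + 4 * β * δ ^ 2 := by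
          field_simp
  calc f ((T : ℝ)⁻¹ • ∑ t ∈ Finset.Icc 1 T, w t)
      ≤ ∑ t ∈ Finset.Icc 1 T, (T : ℝ)⁻¹ * f (w t) := hjen
    _ = (T : ℝ)⁻¹ * ∑ t ∈ Finset.Icc 1 T, f (w t) := hsum2
    _ ≤ ‖w 1 - wstar‖ ^ 2 / (η * T) + 4 * β * δ ^ 2 := hfin
end

section
/- The function φ_z(w) = (1/2)(max(‖[w ⊙ z]₊‖ − ρ, 0))² has ‖z‖_∞²-Lipschitz gradient: ‖∇φ_z(x) − ∇φ_z(y)‖ ≤ ‖z‖_∞²·‖x − y‖ for all x, y ∈ ℝ^d. -/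
open Filter Topology InnerProductSpace

noncomputable section Aux14

private lemma aux_maxSq (t : ℝ) :
    HasDerivAt (fun s : ℝ => max s 0 ^ 2) (2 * max t 0) t := by
  rcases lt_trichotomy t 0 with h | h | h
  · have he : (fun s : ℝ => max s 0 ^ 2) =ᶠ[𝓝 t] fun _ => (0:ℝ) := by
      filter_upwards [Iio_mem_nhds h] with s hs
      simp [max_eq_right (le_of_lt (Set.mem_Iio.mp hs))]
    have := (hasDerivAt_const t (0:ℝ)).congr_of_eventuallyEq he
    simpa [max_eq_right h.le] using this
  · subst h
    rw [hasDerivAt_iff_tendsto_slope]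
    simp only [max_self, mul_zero]
    refine squeeze_zero_norm (fun s => ?_) (a := fun s : ℝ => |s|) ?_
    · have h1 : |max s 0| ≤ |s| := by
        rcases le_total s 0 with hs | hs
        · simp [max_eq_right hs]
        · simp [max_eq_left hs]
      have h2 : ‖slope (fun s : ℝ => max s 0 ^ 2) 0 s‖ = |s|⁻¹ * |max s 0| ^ 2 := by
        simp [slope, abs_mul, sq_abs, abs_pow]
      rw [h2]
      rcases eq_or_ne s 0 with rfl | hs
      · simp
      · have : |max s 0| ^ 2 ≤ |s| ^ 2 := by
          exact pow_le_pow_left₀ (abs_nonneg _) h1 2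
        calc |s|⁻¹ * |max s 0| ^ 2 ≤ |s|⁻¹ * |s| ^ 2 := by
              exact mul_le_mul_of_nonneg_left this (by positivity)
          _ = |s| := by field_simp [abs_ne_zero.mpr hs]
    · have : Tendsto (fun s : ℝ => |s|) (𝓝 0) (𝓝 0) := by
        simpa using continuous_abs.tendsto (0:ℝ)
      exact this.mono_left nhdsWithin_le_nhds
  · have he : (fun s : ℝ => max s 0 ^ 2) =ᶠ[𝓝 t] fun s => s ^ 2 := by
      filter_upwards [Ioi_mem_nhds h] with s hs
      simp [max_eq_left (le_of_lt (Set.mem_Ioi.mp hs))]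
    have h2 : HasDerivAt (fun s : ℝ => s ^ 2) (2 * t) t := by
      simpa using (hasDerivAt_pow 2 t)
    have := h2.congr_of_eventuallyEq he
    simpa [max_eq_left h.le] using this

variable {d : ℕ} (z : EuclideanSpace ℝ (Fin d)) (ρ : ℝ)

private def sF (w : EuclideanSpace ℝ (Fin d)) : ℝ := ∑ i, max (w i * z i) 0 ^ 2

private def vA (w : EuclideanSpace ℝ (Fin d)) : EuclideanSpace ℝ (Fin d) :=
  WithLp.toLp 2 fun i => z i * max (w i * z i) 0

private def vG (w : EuclideanSpace ℝ (Fin d)) : EuclideanSpace ℝ (Fin d) :=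
  (max (Real.sqrt (sF z w) - ρ) 0 / Real.sqrt (sF z w)) • vA z w

private lemma sF_nonneg (w : EuclideanSpace ℝ (Fin d)) : 0 ≤ sF z w :=
  Finset.sum_nonneg fun i _ => by positivity

private lemma vA_eq_zero {w : EuclideanSpace ℝ (Fin d)} (h : sF z w = 0) : vA z w = 0 := by
  have h0 : ∀ i ∈ Finset.univ, max (w i * z i) 0 ^ 2 = 0 :=
    (Finset.sum_eq_zero_iff_of_nonneg (fun i _ => by positivity)).mp h
  ext i
  have := h0 i (Finset.mem_univ i)
  have hmax : max (w i * z i) 0 = 0 := by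
    nlinarith [this]
  show z i * max (w i * z i) 0 = 0
  rw [hmax, mul_zero]

private lemma grad_sF (w : EuclideanSpace ℝ (Fin d)) :
    HasGradientAt (sF z) ((2:ℝ) • vA z w) w := by
  rw [hasGradientAt_iff_hasFDerivAt]
  have h1 : HasFDerivAt (sF z)
      (∑ i, (2 * max (w i * z i) 0 * z i) • (EuclideanSpace.proj i :
        EuclideanSpace ℝ (Fin d) →L[ℝ] ℝ)) w := by
    refine HasFDerivAt.fun_sum fun i _ => ?_
    have hp : HasFDerivAt (fun w : EuclideanSpace ℝ (Fin d) => w i)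
        (EuclideanSpace.proj i : EuclideanSpace ℝ (Fin d) →L[ℝ] ℝ) w :=
      (EuclideanSpace.proj i : EuclideanSpace ℝ (Fin d) →L[ℝ] ℝ).hasFDerivAt
    have hg : HasDerivAt (fun s : ℝ => max (s * z i) 0 ^ 2)
        (2 * max (w i * z i) 0 * z i) (w i) := by
      have := (aux_maxSq (w i * z i)).comp (w i) ((hasDerivAt_id (w i)).mul_const (z i))
      simpa [mul_comm, mul_assoc, mul_left_comm, Function.comp_def] using this
    exact hg.comp_hasFDerivAt w hp
  refine h1.congr_fderiv (Eq.symm ?_)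
  refine ContinuousLinearMap.ext fun δ => ?_
  simp only [toDual_apply_apply, PiLp.inner_apply, RCLike.inner_apply, conj_trivial,
    PiLp.smul_apply, smul_eq_mul, ContinuousLinearMap.sum_apply,
    ContinuousLinearMap.smul_apply, PiLp.proj_apply]
  refine Finset.sum_congr rfl fun i _ => ?_
  show δ i * (2 * (z i * max (w i * z i) 0)) = 2 * max (w i * z i) 0 * z i * δ i
  ring

private lemma aux_const_mul {F : Type*} [NormedAddCommGroup F] [InnerProductSpace ℝ F]
    [CompleteSpace F] {f : F → ℝ} {g x : F} (c : ℝ) (h : HasGradientAt f g x) :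
    HasGradientAt (fun y => c * f y) (c • g) x := by
  rw [hasGradientAt_iff_hasFDerivAt] at h ⊢
  have h2 := h.const_smul c
  have h3 : toDual ℝ F (c • g) = c • (toDual ℝ F g) := by
    refine ContinuousLinearMap.ext fun δ => ?_
    simp [toDual_apply_apply, real_inner_smul_left]
  rw [h3]
  exact h2

private lemma grad_phi (hρ : 0 ≤ ρ) (w : EuclideanSpace ℝ (Fin d)) :
    HasGradientAt (fun w => (1/2 : ℝ) * max (Real.sqrt (sF z w) - ρ) 0 ^ 2) (vG z ρ w) w := by
  rcases eq_or_lt_of_le hρ with rfl | hρpos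
  · -- ρ = 0 : the function is (1/2) * sF
    have hfe : (fun w => (1/2 : ℝ) * max (Real.sqrt (sF z w) - 0) 0 ^ 2)
        = fun w => (1/2 : ℝ) * sF z w := by
      funext x
      rw [sub_zero, max_eq_left (Real.sqrt_nonneg _), Real.sq_sqrt (sF_nonneg z x)]
    rw [hfe]
    have h := aux_const_mul (1/2 : ℝ) (grad_sF z w)
    have hsmul : (1/2 : ℝ) • ((2:ℝ) • vA z w) = vA z w := by
      rw [smul_smul]; norm_num
    have hG : vG z 0 w = vA z w := by
      rcases eq_or_ne (Real.sqrt (sF z w)) 0 with hs | hs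
      · have hle : sF z w ≤ 0 := by
          by_contra hc
          push_neg at hc
          exact absurd hs (ne_of_gt (Real.sqrt_pos.mpr hc))
        have hF0 : sF z w = 0 := le_antisymm hle (sF_nonneg z w)
        unfold vG
        rw [vA_eq_zero z hF0, smul_zero]
      · show vG z 0 w = vA z w
        unfold vG
        rw [sub_zero, max_eq_left (Real.sqrt_nonneg _), div_self hs, one_smul]
    rw [hG, ← hsmul]
    exact h
  · rcases eq_or_lt_of_le (sF_nonneg z w) with hF0 | hFpos
    · -- sF z w = 0 : function vanishes near w
      have hG0 : vG z ρ w = 0 := by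
        unfold vG; rw [vA_eq_zero z hF0.symm, smul_zero]
      rw [hG0]
      have hcont : ContinuousAt (sF z) w :=
        (hasGradientAt_iff_hasFDerivAt.mp (grad_sF z w)).differentiableAt.continuousAt
      have hev : (fun w => (1/2 : ℝ) * max (Real.sqrt (sF z w) - ρ) 0 ^ 2)
          =ᶠ[𝓝 w] fun _ => (0:ℝ) := by
        have hmem : sF z ⁻¹' Set.Iio (ρ ^ 2) ∈ 𝓝 w :=
          hcont.preimage_mem_nhds (Iio_mem_nhds (by rw [← hF0]; positivity))
        filter_upwards [hmem] with x hx
        have hs : Real.sqrt (sF z x) < ρ := (Real.sqrt_lt' hρpos).mpr (Set.mem_Iio.mp hx)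
        rw [max_eq_right (by linarith)]
        norm_num
      exact (hasGradientAt_const w (0:ℝ)).congr_of_eventuallyEq hev
    · -- sF z w > 0 : chain rule
      set s0 := Real.sqrt (sF z w) with hs0def
      have hs0 : 0 < s0 := Real.sqrt_pos.mpr hFpos
      have hq : HasDerivAt (fun t : ℝ => (1/2 : ℝ) * max (Real.sqrt t - ρ) 0 ^ 2)
          (max (s0 - ρ) 0 / (2 * s0)) (sF z w) := by
        have h1 : HasDerivAt Real.sqrt (1 / (2 * s0)) (sF z w) :=
          Real.hasDerivAt_sqrt (ne_of_gt hFpos)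
        have h2 := h1.sub_const ρ
        have h3 := (aux_maxSq (s0 - ρ)).comp (sF z w) h2
        have h4 := h3.const_mul (1/2 : ℝ)
        refine h4.congr_deriv ?_
        ring
      have hF := hasGradientAt_iff_hasFDerivAt.mp (grad_sF z w)
      have h5 := hq.comp_hasFDerivAt w hF
      rw [hasGradientAt_iff_hasFDerivAt]
      have hGeq : vG z ρ w = (max (s0 - ρ) 0 / (2 * s0)) • ((2:ℝ) • vA z w) := by
        unfold vG
        rw [smul_smul]
        congr 1
        rw [hs0def]
        field_simp
      rw [hGeq]
      have h6 : toDual ℝ (EuclideanSpace ℝ (Fin d))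
            ((max (s0 - ρ) 0 / (2 * s0)) • ((2:ℝ) • vA z w))
          = (max (s0 - ρ) 0 / (2 * s0)) • toDual ℝ _ ((2:ℝ) • vA z w) := by
        refine ContinuousLinearMap.ext fun δ => ?_
        simp [toDual_apply_apply, real_inner_smul_left]
      rw [h6]
      exact h5

private def vT (v : EuclideanSpace ℝ (Fin d)) : EuclideanSpace ℝ (Fin d) :=
  (max (‖v‖ - ρ) 0 / ‖v‖) • v

private lemma vT_zero {v : EuclideanSpace ℝ (Fin d)} (h : ‖v‖ ≤ ρ) : vT ρ v = 0 := by
  unfold vT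
  rw [max_eq_right (by linarith), zero_div, zero_smul]

private lemma norm_resid_le (hρ : 0 ≤ ρ) (v : EuclideanSpace ℝ (Fin d)) :
    ‖v - vT ρ v‖ ≤ ρ := by
  rcases le_or_gt ‖v‖ ρ with h | h
  · rw [vT_zero ρ h, sub_zero]; exact h
  · have hv : 0 < ‖v‖ := lt_of_le_of_lt hρ h
    have hc : max (‖v‖ - ρ) 0 = ‖v‖ - ρ := max_eq_left (by linarith)
    have : v - vT ρ v = (ρ / ‖v‖) • v := by
      unfold vT
      rw [hc]
      nth_rewrite 1 [← one_smul ℝ v]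
      rw [← sub_smul]
      congr 1
      field_simp
      ring
    rw [this, norm_smul]
    have : ‖(ρ / ‖v‖ : ℝ)‖ = ρ / ‖v‖ := by
      rw [Real.norm_eq_abs, abs_of_nonneg (by positivity)]
    rw [this]
    rw [div_mul_cancel₀ _ (ne_of_gt hv)]

private lemma vT_VI (hρ : 0 ≤ ρ) (v w : EuclideanSpace ℝ (Fin d)) (hw : ‖w‖ ≤ ρ) :
    ⟪vT ρ v, w - (v - vT ρ v)⟫_ℝ ≤ 0 := by
  rcases le_or_gt ‖v‖ ρ with h | h
  · rw [vT_zero ρ h]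
    simp
  · have hv : 0 < ‖v‖ := lt_of_le_of_lt hρ h
    have hc : max (‖v‖ - ρ) 0 = ‖v‖ - ρ := max_eq_left (by linarith)
    set c : ℝ := (‖v‖ - ρ) / ‖v‖ with hcdef
    have hc0 : 0 ≤ c := by rw [hcdef]; apply div_nonneg <;> [linarith; linarith]
    have hT : vT ρ v = c • v := by unfold vT; rw [hc]
    have hres : v - vT ρ v = (ρ / ‖v‖) • v := by
      rw [hT]
      nth_rewrite 1 [← one_smul ℝ v]
      rw [← sub_smul]
      congr 1
      rw [hcdef]
      field_simp
      ring
    rw [hT] at hres ⊢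
    rw [hres, real_inner_smul_left, inner_sub_right, real_inner_smul_right,
      real_inner_self_eq_norm_sq]
    have hiw : ⟪v, w⟫_ℝ ≤ ρ * ‖v‖ := by
      calc ⟪v, w⟫_ℝ ≤ ‖v‖ * ‖w‖ := real_inner_le_norm v w
        _ ≤ ‖v‖ * ρ := mul_le_mul_of_nonneg_left hw (norm_nonneg _)
        _ = ρ * ‖v‖ := mul_comm _ _
    have hkey : ⟪v, w⟫_ℝ - ρ / ‖v‖ * ‖v‖ ^ 2 ≤ 0 := by
      have : ρ / ‖v‖ * ‖v‖ ^ 2 = ρ * ‖v‖ := by field_simp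
      rw [this]
      linarith
    calc c * (⟪v, w⟫_ℝ - ρ / ‖v‖ * ‖v‖ ^ 2) ≤ c * 0 :=
          mul_le_mul_of_nonneg_left hkey hc0
      _ = 0 := mul_zero c

private lemma vT_lipschitz (hρ : 0 ≤ ρ) (u v : EuclideanSpace ℝ (Fin d)) :
    ‖vT ρ u - vT ρ v‖ ≤ ‖u - v‖ := by
  set a := vT ρ u
  set b := vT ρ v
  have h1 := vT_VI ρ hρ u (v - b) (norm_resid_le ρ hρ v)
  have h2 := vT_VI ρ hρ v (u - a) (norm_resid_le ρ hρ u)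
  have hinner : (0:ℝ) ≤ ⟪a - b, (u - a) - (v - b)⟫_ℝ := by
    simp only [inner_sub_left, inner_sub_right] at h1 h2 ⊢
    linarith
  have hdecomp : u - v = (a - b) + ((u - a) - (v - b)) := by abel
  have hsq : ‖a - b‖ ^ 2 ≤ ‖u - v‖ ^ 2 := by
    rw [hdecomp, norm_add_sq_real]
    nlinarith [sq_nonneg ‖(u - a) - (v - b)‖]
  nlinarith [norm_nonneg (a - b), norm_nonneg (u - v)]

private def mulz (a : EuclideanSpace ℝ (Fin d)) : EuclideanSpace ℝ (Fin d) :=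
  WithLp.toLp 2 fun i => z i * a i

private def relu (u : EuclideanSpace ℝ (Fin d)) : EuclideanSpace ℝ (Fin d) :=
  WithLp.toLp 2 fun i => max (u i) 0

private def mz (w : EuclideanSpace ℝ (Fin d)) : EuclideanSpace ℝ (Fin d) :=
  WithLp.toLp 2 fun i => w i * z i

private lemma abs_le_iSup [Nonempty (Fin d)] (i : Fin d) : |z i| ≤ ⨆ j, |z j| :=
  le_ciSup (f := fun j => |z j|) (Set.Finite.bddAbove (Set.finite_range _)) i

private lemma iSup_nonneg' [Nonempty (Fin d)] : 0 ≤ ⨆ j, |z j| :=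
  le_trans (abs_nonneg _) (abs_le_iSup z (Classical.arbitrary _))

private lemma norm_mulz_le [Nonempty (Fin d)] (a : EuclideanSpace ℝ (Fin d)) :
    ‖mulz z a‖ ≤ (⨆ j, |z j|) * ‖a‖ := by
  set M := ⨆ j, |z j| with hMdef
  have hM0 : 0 ≤ M := iSup_nonneg' z
  rw [EuclideanSpace.norm_eq, EuclideanSpace.norm_eq]
  have key : ∑ i, ‖mulz z a i‖ ^ 2 ≤ M ^ 2 * ∑ i, ‖a i‖ ^ 2 := by
    rw [Finset.mul_sum]
    refine Finset.sum_le_sum fun i _ => ?_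
    have h1 : ‖mulz z a i‖ = |z i| * |a i| := by
      show ‖z i * a i‖ = _
      rw [Real.norm_eq_abs, abs_mul]
    rw [h1, Real.norm_eq_abs, mul_pow]
    have h2 : |z i| ^ 2 ≤ M ^ 2 := pow_le_pow_left₀ (abs_nonneg _) (abs_le_iSup z i) 2
    exact mul_le_mul_of_nonneg_right h2 (by positivity)
  calc Real.sqrt (∑ i, ‖mulz z a i‖ ^ 2) ≤ Real.sqrt (M ^ 2 * ∑ i, ‖a i‖ ^ 2) :=
        Real.sqrt_le_sqrt key
    _ = M * Real.sqrt (∑ i, ‖a i‖ ^ 2) := by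
        rw [Real.sqrt_mul (sq_nonneg M), Real.sqrt_sq hM0]

private lemma norm_relu_sub_le (u v : EuclideanSpace ℝ (Fin d)) :
    ‖relu u - relu v‖ ≤ ‖u - v‖ := by
  rw [EuclideanSpace.norm_eq, EuclideanSpace.norm_eq]
  refine Real.sqrt_le_sqrt (Finset.sum_le_sum fun i _ => ?_)
  have h1 : (relu u - relu v) i = max (u i) 0 - max (v i) 0 := by
    rw [PiLp.sub_apply]; rfl
  have h2 : (u - v) i = u i - v i := PiLp.sub_apply _ _ _ _
  rw [h1, h2, Real.norm_eq_abs, Real.norm_eq_abs]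
  exact pow_le_pow_left₀ (abs_nonneg _) (abs_max_sub_max_le_abs _ _ _) 2

private lemma norm_relu_mz (w : EuclideanSpace ℝ (Fin d)) :
    ‖relu (mz z w)‖ = Real.sqrt (sF z w) := by
  rw [EuclideanSpace.norm_eq]
  congr 1
  refine Finset.sum_congr rfl fun i _ => ?_
  show ‖max (w i * z i) 0‖ ^ 2 = max (w i * z i) 0 ^ 2
  rw [Real.norm_eq_abs, sq_abs]

private lemma vG_eq (w : EuclideanSpace ℝ (Fin d)) :
    vG z ρ w = mulz z (vT ρ (relu (mz z w))) := by
  ext i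
  show (max (Real.sqrt (sF z w) - ρ) 0 / Real.sqrt (sF z w)) • vA z w i
      = z i * vT ρ (relu (mz z w)) i
  have h1 : vT ρ (relu (mz z w)) i
      = (max (‖relu (mz z w)‖ - ρ) 0 / ‖relu (mz z w)‖) * max (w i * z i) 0 := by
    show ((max (‖relu (mz z w)‖ - ρ) 0 / ‖relu (mz z w)‖) • relu (mz z w)) i = _
    rw [PiLp.smul_apply, smul_eq_mul]
    rfl
  rw [h1, norm_relu_mz]
  show (max (Real.sqrt (sF z w) - ρ) 0 / Real.sqrt (sF z w)) * (z i * max (w i * z i) 0) = _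
  ring

private lemma mulz_sub (a b : EuclideanSpace ℝ (Fin d)) :
    mulz z a - mulz z b = mulz z (a - b) := by
  ext i
  rw [PiLp.sub_apply]
  show z i * a i - z i * b i = z i * (a - b) i
  rw [PiLp.sub_apply, mul_sub]

private lemma mz_sub (x y : EuclideanSpace ℝ (Fin d)) :
    mz z x - mz z y = mulz z (x - y) := by
  ext i
  rw [PiLp.sub_apply]
  show x i * z i - y i * z i = z i * (x - y) i
  rw [PiLp.sub_apply]
  ring

end Aux14

/-- For `φ_z(w) = (1/2)(max(‖[w ⊙ z]₊‖ - ρ, 0))²`, the gradient is `‖z‖_∞²`-Lipschitz: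
`‖∇φ_z(x) - ∇φ_z(y)‖ ≤ ‖z‖_∞²·‖x - y‖`. -/
theorem stmt_14 (d : ℕ) (hd : 0 < d) (ρ : ℝ) (hρ : 0 ≤ ρ)
    (z : EuclideanSpace ℝ (Fin d))
    (φ : EuclideanSpace ℝ (Fin d) → ℝ)
    (hφ : ∀ w, φ w = (1 / 2) * max (Real.sqrt (∑ i, max (w i * z i) 0 ^ 2) - ρ) 0 ^ 2) :
    ∀ x y : EuclideanSpace ℝ (Fin d),
      ‖gradient φ x - gradient φ y‖ ≤ (⨆ i, |z i|) ^ 2 * ‖x - y‖ := by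
  have hNe : Nonempty (Fin d) := ⟨⟨0, hd⟩⟩
  intro x y
  have hgrad : ∀ w, gradient φ w = vG z ρ w := by
    intro w
    have h1 : HasGradientAt φ (vG z ρ w) w := by
      refine (grad_phi z ρ hρ w).congr_of_eventuallyEq ?_
      filter_upwards with u
      rw [hφ u]
      rfl
    exact h1.gradient
  rw [hgrad x, hgrad y, vG_eq, vG_eq, mulz_sub]
  set M := ⨆ j, |z j| with hMdef
  have hM0 : 0 ≤ M := iSup_nonneg' z
  calc ‖mulz z (vT ρ (relu (mz z x)) - vT ρ (relu (mz z y)))‖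
      ≤ M * ‖vT ρ (relu (mz z x)) - vT ρ (relu (mz z y))‖ := norm_mulz_le z _
    _ ≤ M * ‖relu (mz z x) - relu (mz z y)‖ :=
        mul_le_mul_of_nonneg_left (vT_lipschitz ρ hρ _ _) hM0
    _ ≤ M * ‖mz z x - mz z y‖ :=
        mul_le_mul_of_nonneg_left (norm_relu_sub_le _ _) hM0
    _ = M * ‖mulz z (x - y)‖ := by rw [mz_sub]
    _ ≤ M * (M * ‖x - y‖) :=
        mul_le_mul_of_nonneg_left (norm_mulz_le z _) hM0
    _ = M ^ 2 * ‖x - y‖ := by ring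
end

section
/- Suppose a sequence w_1, …, w_T in ℝ^d satisfies: at each step t, w_{t+1} = w_t − η(r − ρ)e_{I_t} where I_1, …, I_T are distinct standard-basis indices, w_1 = 0, and η(r − ρ) ≤ 1/√T. Then ‖w_t‖ ≤ 1 for all t ≤ T + 1, and for any suffix average ŵ_τ = (1/(T−τ+1))Σ_{t=τ}^T w_t and any s ≤ T/2, the coordinate satisfies ŵ_τ(I_s) ≤ −η(r − ρ)/2. -/
/-- If `w₁ = 0` and at each step `t = 1,…,T` the iterate moves by `-η(r-ρ)` along a fresh
standard-basis direction `e_{I_t}` (the `I_t` pairwise distinct), with `η(r-ρ) ≤ 1/√T`,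
then all iterates stay in the unit ball, and every suffix average `ŵ_τ` satisfies
`ŵ_τ(I_s) ≤ -η(r-ρ)/2` for every `s ≤ T/2`. -/
theorem stmt_19 (d T : ℕ) (hT : 1 ≤ T) (η r ρ : ℝ) (hη : 0 < η) (hρ : 0 ≤ ρ) (hrρ : ρ < r)
    (hstep : η * (r - ρ) ≤ 1 / Real.sqrt T)
    (I : ℕ → Fin d)
    (hI : ∀ s t : ℕ, 1 ≤ s → s ≤ T → 1 ≤ t → t ≤ T → s ≠ t → I s ≠ I t)
    (w : ℕ → EuclideanSpace ℝ (Fin d)) (hw1 : w 1 = 0)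
    (hupd : ∀ t, 1 ≤ t → t ≤ T →
      w (t + 1) = w t - (η * (r - ρ)) • EuclideanSpace.single (I t) 1) :
    (∀ t, 1 ≤ t → t ≤ T + 1 → ‖w t‖ ≤ 1) ∧
      (∀ τ s : ℕ, 1 ≤ τ → τ ≤ T → 1 ≤ s → (s : ℝ) ≤ (T : ℝ) / 2 →
        ((T : ℝ) - τ + 1)⁻¹ * ∑ t ∈ Finset.Icc τ T, w t (I s)
          ≤ -(η * (r - ρ)) / 2) := by
  set c := η * (r - ρ) with hc
  have hc0 : 0 < c := mul_pos hη (sub_pos.2 hrρ)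
  -- coordinate formula
  have Pcoord : ∀ t, 1 ≤ t → t ≤ T + 1 → ∀ s, 1 ≤ s → s ≤ T →
      w t (I s) = if s + 1 ≤ t then -c else 0 := by
    intro t ht1
    induction t, ht1 using Nat.le_induction with
    | base =>
      intro _ s hs1 hsT
      rw [hw1, if_neg (by omega : ¬ (s + 1 ≤ 1))]
      rfl
    | succ t ht1 ih =>
      intro ht2 s hs1 hsT
      have htT : t ≤ T := by omega
      have ihs := ih (by omega) s hs1 hsT
      rw [hupd t ht1 htT]
      simp only [PiLp.sub_apply, PiLp.smul_apply, smul_eq_mul, EuclideanSpace.single_apply]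
      by_cases hst : s = t
      · subst hst
        rw [if_pos rfl, ihs, if_neg (show ¬ (s + 1 ≤ s) by omega),
          if_pos (le_refl (s + 1))]
        ring
      · have hne : I s ≠ I t := hI s t hs1 hsT ht1 htT hst
        rw [if_neg hne, ihs]
        have : (s + 1 ≤ t) ↔ (s + 1 ≤ t + 1) := by omega
        rw [if_congr this rfl rfl]
        ring
  -- norm bound
  have Qnorm : ∀ t, 1 ≤ t → t ≤ T + 1 → ‖w t‖ ^ 2 ≤ ((t : ℝ) - 1) * c ^ 2 := by
    intro t ht1
    induction t, ht1 using Nat.le_induction with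
    | base => intro _; simp [hw1]
    | succ t ht1 ih =>
      intro ht2
      have htT : t ≤ T := by omega
      have ihn := ih (by omega)
      have hcoord : w t (I t) = 0 := by
        rw [Pcoord t ht1 (by omega) t ht1 htT, if_neg (by omega)]
      rw [hupd t ht1 htT]
      rw [norm_sub_sq_real]
      have hinner : inner ℝ (w t) (c • EuclideanSpace.single (I t) (1:ℝ)) = (0:ℝ) := by
        rw [real_inner_smul_right, EuclideanSpace.inner_single_right]
        simp [hcoord]
      rw [hinner, norm_smul, EuclideanSpace.norm_single]
      have : ‖c‖ = c := abs_of_pos hc0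
      rw [this, norm_one]
      push_cast
      nlinarith
  have hsqT : (0:ℝ) < Real.sqrt T := Real.sqrt_pos.2 (by exact_mod_cast hT)
  constructor
  · intro t ht1 ht2
    have h1 : ‖w t‖ ^ 2 ≤ ((t : ℝ) - 1) * c ^ 2 := Qnorm t ht1 ht2
    have h2 : ((t : ℝ) - 1) ≤ (T : ℝ) := by
      have : (t : ℝ) ≤ (T : ℝ) + 1 := by exact_mod_cast ht2
      linarith
    have h3 : c ^ 2 ≤ (1 / Real.sqrt T) ^ 2 := by
      have : 0 < 1 / Real.sqrt T := by positivity
      nlinarith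
    have h4 : (1 / Real.sqrt T) ^ 2 = 1 / (T : ℝ) := by
      rw [div_pow, one_pow, Real.sq_sqrt (by positivity : (0:ℝ) ≤ (T:ℝ))]
    have hTpos : (0:ℝ) < (T : ℝ) := by exact_mod_cast hT
    have h5 : ‖w t‖ ^ 2 ≤ 1 := by
      have : ((t : ℝ) - 1) * c ^ 2 ≤ (T : ℝ) * (1 / (T : ℝ)) := by
        rw [← h4]
        have hcnn : (0:ℝ) ≤ c ^ 2 := sq_nonneg c
        nlinarith
      rw [mul_one_div, div_self (ne_of_gt hTpos)] at this
      linarith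
    nlinarith [norm_nonneg (w t)]
  · intro τ s hτ1 hτT hs1 hsT2
    have h2s : 2 * s ≤ T := by
      have : ((2 * s : ℕ) : ℝ) ≤ (T : ℝ) := by push_cast; linarith
      exact_mod_cast this
    have hsT : s + 1 ≤ T := by omega
    have hsum : ∑ t ∈ Finset.Icc τ T, w t (I s)
        = ∑ t ∈ Finset.Icc τ T, (if s + 1 ≤ t then -c else 0) := by
      apply Finset.sum_congr rfl
      intro t htmem
      rw [Finset.mem_Icc] at htmem
      exact Pcoord t (by omega) (by omega) s hs1 (by omega)
    set m := max (s + 1) τ with hm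
    have hfilter : (Finset.Icc τ T).filter (fun t => s + 1 ≤ t) = Finset.Icc m T := by
      ext x
      simp only [Finset.mem_filter, Finset.mem_Icc, hm]
      omega
    have hsum2 : ∑ t ∈ Finset.Icc τ T, (if s + 1 ≤ t then -c else 0)
        = ((Finset.Icc m T).card : ℝ) * (-c) := by
      rw [← Finset.sum_filter, hfilter, Finset.sum_const, nsmul_eq_mul]
    have hcard : (Finset.Icc m T).card = T + 1 - m := Nat.card_Icc m T
    have hmT : m ≤ T := by omega
    have hNcast : (((T + 1 - m : ℕ)) : ℝ) = (T : ℝ) + 1 - m := by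
      push_cast [Nat.cast_sub (by omega : m ≤ T + 1)]
      ring
    have hN2 : (T : ℝ) - τ + 1 ≤ 2 * ((T : ℝ) + 1 - m) := by
      have h1 : T - τ + 1 ≤ 2 * (T + 1 - m) := by omega
      have := (Nat.cast_le (α := ℝ)).2 h1
      push_cast [Nat.cast_sub hτT, Nat.cast_sub (by omega : m ≤ T + 1)] at this
      linarith
    rw [hsum, hsum2, hcard, hNcast]
    have hD : (0:ℝ) < (T : ℝ) - τ + 1 := by
      have : (τ : ℝ) ≤ (T : ℝ) := by exact_mod_cast hτT
      linarith
    rw [inv_mul_le_iff₀ hD]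
    have hmR : (0:ℝ) ≤ (T : ℝ) + 1 - m := by
      have : (m : ℝ) ≤ (T : ℝ) := by exact_mod_cast hmT
      linarith
    nlinarith
end
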